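/- Let X, Y be finite sets with |X| = ℓ ≥ 2, |Y| = n ≥ 2, and let 𝒴 = {R ⊆ X × Y : for all x ∈ dom(R) there exist distinct y, y' ∈ Y with (x,y), (x,y') ∈ R} (anonymous relations). Then DD(𝒴) = 2^ℓ, and DDd(𝒴) = Σ_{k=0}^{ℓ} C(ℓ,k)·C(n,2)^k = (1 + n(n−1)/2)^ℓ. -/

import Mathlib

open Set

/-- A family of sets is convex if it is closed under set-theoretic betweenness. -/
def IsConvexFam {X : Type*} (𝒜 : Set (Set X)) : Prop :=
  ∀ S ∈ 𝒜, ∀ T ∈ 𝒜, ∀ C : Set X, S ⊆ C → C ⊆ T → C ∈ 𝒜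

/-- A family is dominated if its union belongs to it. -/
def IsDominatedFam {X : Type*} (𝒜 : Set (Set X)) : Prop := ⋃₀ 𝒜 ∈ 𝒜

/-- A family is supported if it is nonempty and its intersection belongs to it. -/
def IsSupportedFam {X : Type*} (𝒜 : Set (Set X)) : Prop := 𝒜.Nonempty ∧ ⋂₀ 𝒜 ∈ 𝒜

/-- A family is an interval if it equals `[A,B] = {C | A ⊆ C ⊆ B}` for some `A ⊆ B`. -/
def IsIntervalFam {X : Type*} (𝒜 : Set (Set X)) : Prop :=
  ∃ A B : Set X, A ⊆ B ∧ 𝒜 = Set.Icc A B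

/-- `𝒢` dominates `𝒜` if there are dominated convex families `𝒟 G ⊆ 𝒜` (`G ∈ 𝒢`)
with `⋃ G ∈ 𝒢, 𝒟 G = 𝒜` and `⋃₀ (𝒟 G) = G`. -/
def DominatesFam {X : Type*} (𝒢 𝒜 : Set (Set X)) : Prop :=
  𝒢 ⊆ 𝒜 ∧ ∃ 𝒟 : Set X → Set (Set X),
    (∀ G ∈ 𝒢, 𝒟 G ⊆ 𝒜 ∧ IsConvexFam (𝒟 G) ∧ IsDominatedFam (𝒟 G) ∧ ⋃₀ (𝒟 G) = G) ∧
    (⋃ G ∈ 𝒢, 𝒟 G) = 𝒜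

/-- `𝒦` supports `𝒜` if there are supported convex families `𝒮 K ⊆ 𝒜` (`K ∈ 𝒦`)
with `⋃ K ∈ 𝒦, 𝒮 K = 𝒜` and `⋂₀ (𝒮 K) = K`. -/
def SupportsFam {X : Type*} (𝒦 𝒜 : Set (Set X)) : Prop :=
  𝒦 ⊆ 𝒜 ∧ ∃ 𝒮 : Set X → Set (Set X),
    (∀ K ∈ 𝒦, 𝒮 K ⊆ 𝒜 ∧ IsConvexFam (𝒮 K) ∧ IsSupportedFam (𝒮 K) ∧ ⋂₀ (𝒮 K) = K) ∧
    (⋃ K ∈ 𝒦, 𝒮 K) = 𝒜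

/-- The upper dimension: the minimal cardinality of a dominating subfamily. -/
noncomputable def upperDim {X : Type*} (𝒜 : Set (Set X)) : ℕ∞ :=
  sInf {n : ℕ∞ | ∃ 𝒢 : Set (Set X), DominatesFam 𝒢 𝒜 ∧ 𝒢.encard = n}

/-- The dual upper dimension: the minimal cardinality of a supporting subfamily. -/
noncomputable def dualDim {X : Type*} (𝒜 : Set (Set X)) : ℕ∞ :=
  sInf {n : ℕ∞ | ∃ 𝒦 : Set (Set X), SupportsFam 𝒦 𝒜 ∧ 𝒦.encard = n}

/-- The cylindrical dimension: the minimal number of intervals whose union is `𝒜`. -/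
noncomputable def cylDim {X : Type*} (𝒜 : Set (Set X)) : ℕ∞ :=
  sInf {n : ℕ∞ | ∃ 𝕀 : Set (Set (Set X)),
    (∀ J ∈ 𝕀, IsIntervalFam J) ∧ ⋃₀ 𝕀 = 𝒜 ∧ 𝕀.encard = n}

open Classical in
noncomputable def chiFun {X : Type*} (A : Set X) (x : X) : Bool := decide (x ∈ A)

/-- The set-theoretic operation corresponding to a binary operation on `{0,1}`. -/
noncomputable def setOp {X : Type*} (op : Bool → Bool → Bool) (A B : Set X) : Set X :=
  {x | op (chiFun A x) (chiFun B x) = true}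

/-- The tensor operation on families corresponding to a binary operation on `{0,1}`. -/
noncomputable def tensorFam {X : Type*} (op : Bool → Bool → Bool)
    (𝒜 ℬ : Set (Set X)) : Set (Set X) :=
  Set.image2 (setOp op) 𝒜 ℬ

/-- The convex shadow of `A` in `𝒜`. -/
def convexShadow {X : Type*} (𝒜 : Set (Set X)) (A : Set X) : Set (Set X) :=
  {B | B ⊆ A ∧ Set.Icc B A ⊆ 𝒜}

/-- Domain of a relation. -/
def relDom {X Y : Type*} (R : Set (X × Y)) : Set X := {x | ∃ y, (x, y) ∈ R}

/-- Range of a relation. -/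
def relRg {X Y : Type*} (R : Set (X × Y)) : Set Y := {y | ∃ x, (x, y) ∈ R}

/-- The family of (partial) functions from `X` to `Y`, as sets of pairs. -/
def partialFunFam (X Y : Type*) : Set (Set (X × Y)) :=
  {f | ∀ x y y', (x, y) ∈ f → (x, y') ∈ f → y = y'}

/-- The family of relations on `X` with disjoint domain and range. -/
def exclFam (X : Type*) : Set (Set (X × X)) :=
  {R | relDom R ∩ relRg R = ∅}

/-- The family of relations on `X` whose domain is included in their range. -/
def inclFam (X : Type*) : Set (Set (X × X)) :=
  {R | relDom R ⊆ relRg R}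

/-- The family of anonymous relations: every point of the domain has two distinct images. -/
def anonFam (X Y : Type*) : Set (Set (X × Y)) :=
  {R | ∀ x ∈ relDom R, ∃ y y' : Y, y ≠ y' ∧ (x, y) ∈ R ∧ (x, y') ∈ R}

/-- The family of rectangles `A × B`. -/
def rectFam (X Y : Type*) : Set (Set (X × Y)) :=
  {P | ∃ (A : Set X) (B : Set Y), P = A ×ˢ B}

/-- General tensor disjunction of an indexed family of families of sets. -/
def gTensorDisj {ι X : Type*} (𝒜 : ι → Set (Set X)) : Set (Set X) :=
  {U | ∃ f : ι → Set X, (∀ i, f i ∈ 𝒜 i) ∧ U = ⋃ i, f i}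

/-- The Kripke operator associated to a relation `ℛ ⊆ 𝒫(Y) × 𝒫(X)^n`. -/
def kripkeOp {X Y : Type*} {n : ℕ} (ℛ : Set (Set Y × (Fin n → Set X)))
    (𝒜 : Fin n → Set (Set X)) : Set (Set Y) :=
  {B | ∃ A : Fin n → Set X, (∀ i, A i ∈ 𝒜 i) ∧ (B, A) ∈ ℛ}

section Aux
variable {X Y : Type*}

lemma relDom_mono {R S : Set (X × Y)} (h : R ⊆ S) : relDom R ⊆ relDom S :=
  fun _ ⟨y, hy⟩ => ⟨y, h hy⟩

/-- membership characterization -/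
lemma mem_anonFam {R : Set (X × Y)} :
    R ∈ anonFam X Y ↔ ∀ x ∈ relDom R, ∃ y y' : Y, y ≠ y' ∧ (x, y) ∈ R ∧ (x, y') ∈ R :=
  Iff.rfl

/-- the rectangle A ×ˢ univ is anonymous when Y has two elements -/
lemma prod_univ_mem_anon {y₀ y₁ : Y} (hy : y₀ ≠ y₁) (A : Set X) :
    A ×ˢ (Set.univ : Set Y) ∈ anonFam X Y := by
  intro x hx
  obtain ⟨y, hy'⟩ := hx
  exact ⟨y₀, y₁, hy, ⟨hy'.1, trivial⟩, ⟨hy'.1, trivial⟩⟩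

lemma relDom_prod_univ [Nonempty Y] (A : Set X) :
    relDom (A ×ˢ (Set.univ : Set Y)) = A := by
  ext x
  constructor
  · rintro ⟨y, hy, -⟩; exact hy
  · intro hx; exact ⟨Classical.arbitrary Y, hx, trivial⟩

end Aux
set_option linter.unusedSectionVars false
section Upper
variable {X Y : Type*} [Fintype X] [Fintype Y]

/-- the uniform dominating decomposition -/
def domD (G : Set (X × Y)) : Set (Set (X × Y)) :=
  {R | R ∈ anonFam X Y ∧ relDom R = relDom G}

lemma domD_convex (G : Set (X × Y)) : IsConvexFam (domD (X := X) (Y := Y) G) := by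
  rintro S ⟨hS, hdS⟩ T ⟨hT, hdT⟩ C hSC hCT
  have hdC : relDom C = relDom G :=
    le_antisymm (hdT ▸ relDom_mono hCT) (hdS ▸ relDom_mono hSC)
  refine ⟨?_, hdC⟩
  intro x hx
  have hxS : x ∈ relDom S := by rw [hdS, ← hdC]; exact hx
  obtain ⟨y, y', hne, h1, h2⟩ := hS x hxS
  exact ⟨y, y', hne, hSC h1, hSC h2⟩

lemma sUnion_domD {y₀ y₁ : Y} (hy : y₀ ≠ y₁) (A : Set X) :
    ⋃₀ (domD (A ×ˢ (Set.univ : Set Y))) = A ×ˢ (Set.univ : Set Y) := by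
  apply le_antisymm
  · rintro ⟨x, y⟩ ⟨R, ⟨-, hdR⟩, hxy⟩
    have : x ∈ relDom (A ×ˢ (Set.univ : Set Y)) := hdR ▸ ⟨y, hxy⟩
    obtain ⟨y', hy', -⟩ := this
    exact ⟨hy', trivial⟩
  · exact Set.subset_sUnion_of_mem ⟨prod_univ_mem_anon hy A, rfl⟩

theorem upperDim_anon (hX : 2 ≤ Fintype.card X) (hY : 2 ≤ Fintype.card Y) :
    upperDim (anonFam X Y) = ((2 ^ Fintype.card X : ℕ) : ℕ∞) := by
  obtain ⟨y₀, y₁, hy⟩ := Fintype.exists_pair_of_one_lt_card (by omega : 1 < Fintype.card Y)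
  have : Nonempty Y := ⟨y₀⟩
  apply le_antisymm
  · -- upper bound: exhibit a dominating family
    apply sInf_le
    refine ⟨Set.range (fun A : Set X => A ×ˢ (Set.univ : Set Y)), ⟨?_, ?_⟩, ?_⟩
    · rintro G ⟨A, rfl⟩; exact prod_univ_mem_anon hy A
    · refine ⟨domD, ?_, ?_⟩
      · rintro G ⟨A, rfl⟩
        exact ⟨fun R hR => hR.1, domD_convex _, by
          rw [IsDominatedFam, sUnion_domD hy]
          exact ⟨prod_univ_mem_anon hy A, rfl⟩, sUnion_domD hy A⟩
      · apply le_antisymm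
        · rintro R hR
          simp only [Set.mem_iUnion] at hR
          obtain ⟨G, -, hR, -⟩ := hR
          exact hR
        · intro R hR
          simp only [Set.mem_iUnion]
          exact ⟨relDom R ×ˢ Set.univ, ⟨relDom R, rfl⟩, hR, (relDom_prod_univ _).symm⟩
    · -- cardinality
      rw [← Set.image_univ]
      rw [Set.InjOn.encard_image (fun A _ B _ h => by
        have := congrArg relDom h
        rwa [relDom_prod_univ, relDom_prod_univ] at this)]
      rw [Set.encard_univ, ENat.card_eq_coe_fintype_card, Fintype.card_set]
  · -- lower bound
    apply le_sInf
    rintro m ⟨𝒢, ⟨h𝒢A, 𝒟, h𝒟, hcov⟩, rfl⟩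
    -- for each A choose G_A
    have key : ∀ A : Set X, ∃ G ∈ 𝒢, relDom G = A := by
      intro A
      have hRA : A ×ˢ ({y₀, y₁} : Set Y) ∈ anonFam X Y := by
        intro x hx
        obtain ⟨y, hy', -⟩ := hx
        exact ⟨y₀, y₁, hy, ⟨hy', Or.inl rfl⟩, ⟨hy', Or.inr rfl⟩⟩
      have : A ×ˢ ({y₀, y₁} : Set Y) ∈ ⋃ G ∈ 𝒢, 𝒟 G := hcov ▸ hRA
      simp only [Set.mem_iUnion] at this
      obtain ⟨G, hG, hmem⟩ := this
      obtain ⟨hsub, hconv, hdom, huni⟩ := h𝒟 G hG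
      refine ⟨G, hG, ?_⟩
      have hGD : G ∈ 𝒟 G := by have := hdom; rw [IsDominatedFam] at this; rwa [huni] at this
      have hRG : A ×ˢ ({y₀, y₁} : Set Y) ⊆ G := huni ▸ Set.subset_sUnion_of_mem hmem
      apply le_antisymm
      · rintro x ⟨y, hxy⟩
        by_contra hxA
        -- C = R_A ∪ {(x,y)} is in the interval, hence anonymous, contradiction
        have hC : (A ×ˢ ({y₀, y₁} : Set Y)) ∪ {(x, y)} ∈ anonFam X Y := by
          have := hconv _ hmem _ hGD ((A ×ˢ ({y₀, y₁} : Set Y)) ∪ {(x, y)})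
            Set.subset_union_left
            (Set.union_subset hRG (by simpa using hxy))
          exact hsub this
        obtain ⟨z, z', hzz, h1, h2⟩ := hC x ⟨y, Or.inr rfl⟩
        have hz : z = y := by
          rcases h1 with h1 | h1
          · exact absurd h1.1 hxA
          · exact congrArg Prod.snd (Set.mem_singleton_iff.mp h1)
        have hz' : z' = y := by
          rcases h2 with h2 | h2
          · exact absurd h2.1 hxA
          · exact congrArg Prod.snd (Set.mem_singleton_iff.mp h2)
        exact hzz (hz.trans hz'.symm)
      · intro x hx
        exact ⟨y₀, hRG ⟨hx, Or.inl rfl⟩⟩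
    choose f hf𝒢 hfdom using key
    have hinj : Function.Injective f := fun A B h => by
      rw [← hfdom A, ← hfdom B, h]
    calc ((2 ^ Fintype.card X : ℕ) : ℕ∞)
        = (Set.univ : Set (Set X)).encard := by
          rw [Set.encard_univ, ENat.card_eq_coe_fintype_card, Fintype.card_set]
      _ = (f '' Set.univ).encard := (Set.InjOn.encard_image (hinj.injOn)).symm
      _ ≤ 𝒢.encard := Set.encard_le_encard (by rintro G ⟨A, -, rfl⟩; exact hf𝒢 A)

end Upper
section Dual
set_option linter.unusedSectionVars false
variable {X Y : Type*} [Fintype X] [Fintype Y]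

/-- parametrization of 2-regular relations -/
def PhiMap (g : X → Option {s : Finset Y // s.card = 2}) : Set (X × Y) :=
  {p | ∃ s : {s : Finset Y // s.card = 2}, g p.1 = some s ∧ p.2 ∈ s.1}

lemma mem_PhiMap {g : X → Option {s : Finset Y // s.card = 2}} {x : X} {y : Y}
    {s : {s : Finset Y // s.card = 2}} (hg : g x = some s) :
    (x, y) ∈ PhiMap g ↔ y ∈ s.1 := by
  constructor
  · rintro ⟨t, ht, hy⟩
    rw [hg] at ht
    cases Option.some_injective _ ht
    exact hy
  · intro hy; exact ⟨s, hg, hy⟩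

lemma not_mem_PhiMap {g : X → Option {s : Finset Y // s.card = 2}} {x : X} {y : Y}
    (hg : g x = none) : (x, y) ∉ PhiMap g := by
  rintro ⟨t, ht, -⟩
  rw [hg] at ht
  exact nomatch ht

lemma PhiMap_injective : Function.Injective (PhiMap (X := X) (Y := Y)) := by
  classical
  intro g g' h
  funext x
  cases hg : g x with
  | none =>
    cases hg' : g' x with
    | none => rfl
    | some s =>
      obtain ⟨a, b, hab, hs⟩ := Finset.card_eq_two.mp s.2
      have : (x, a) ∈ PhiMap g' := (mem_PhiMap hg').mpr (by rw [hs]; simp)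
      rw [← h] at this
      exact absurd this (not_mem_PhiMap hg)
  | some s =>
    cases hg' : g' x with
    | none =>
      obtain ⟨a, b, hab, hs⟩ := Finset.card_eq_two.mp s.2
      have : (x, a) ∈ PhiMap g := (mem_PhiMap hg).mpr (by rw [hs]; simp)
      rw [h] at this
      exact absurd this (not_mem_PhiMap hg')
    | some s' =>
      congr 1
      ext1
      ext y
      rw [← mem_PhiMap hg, h, mem_PhiMap hg']

lemma PhiMap_mem_anon (g : X → Option {s : Finset Y // s.card = 2}) :
    PhiMap g ∈ anonFam X Y := by
  classical
  rintro x ⟨y, s, hg, hy⟩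
  obtain ⟨a, b, hab, hs⟩ := Finset.card_eq_two.mp s.2
  exact ⟨a, b, hab, (mem_PhiMap hg).mpr (by rw [hs]; simp),
    (mem_PhiMap hg).mpr (by rw [hs]; simp)⟩

/-- the 2-regular relations -/
def twoReg (X Y : Type*) : Set (Set (X × Y)) := Set.range (PhiMap (X := X) (Y := Y))

lemma twoReg_subset_anon : twoReg X Y ⊆ anonFam X Y := by
  rintro K ⟨g, rfl⟩; exact PhiMap_mem_anon g

/-- the uniform supporting decomposition -/
def supS (K : Set (X × Y)) : Set (Set (X × Y)) :=
  {R | R ∈ anonFam X Y ∧ K ⊆ R ∧ relDom R ⊆ relDom K}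

lemma supS_convex (K : Set (X × Y)) : IsConvexFam (supS (X := X) (Y := Y) K) := by
  rintro S ⟨hS, hKS, hdS⟩ T ⟨hT, hKT, hdT⟩ C hSC hCT
  refine ⟨?_, hKS.trans hSC, (relDom_mono hCT).trans hdT⟩
  intro x hx
  have hxS : x ∈ relDom S := by
    obtain ⟨y, hy⟩ := hx
    have hxT : x ∈ relDom K := hdT (relDom_mono hCT ⟨y, hy⟩)
    obtain ⟨y', hy'⟩ := hxT
    exact ⟨y', hKS hy'⟩
  obtain ⟨y, y', hne, h1, h2⟩ := hS x hxS
  exact ⟨y, y', hne, hSC h1, hSC h2⟩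

lemma supS_mem_self {K : Set (X × Y)} (hK : K ∈ anonFam X Y) : K ∈ supS K :=
  ⟨hK, le_refl _, le_refl _⟩

lemma sInter_supS {K : Set (X × Y)} (hK : K ∈ anonFam X Y) : ⋂₀ (supS K) = K := by
  apply le_antisymm
  · exact Set.sInter_subset_of_mem (supS_mem_self hK)
  · exact fun p hp R hR => hR.2.1 hp

/-- every anonymous relation contains a 2-regular one with same domain -/
lemma exists_twoReg_le {R : Set (X × Y)} (hR : R ∈ anonFam X Y) :
    ∃ g : X → Option {s : Finset Y // s.card = 2},
      PhiMap g ⊆ R ∧ relDom R ⊆ relDom (PhiMap g) := by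
  classical
  choose f f' hne h1 h2 using hR
  refine ⟨fun x => if h : x ∈ relDom R then
      some ⟨{f x h, f' x h}, Finset.card_pair (hne x h)⟩ else none, ?_, ?_⟩
  · rintro ⟨x, y⟩ ⟨s, hg, hy⟩
    by_cases h : x ∈ relDom R
    · simp only [dif_pos h] at hg
      cases Option.some_injective _ hg
      simp only [Finset.mem_insert, Finset.mem_singleton] at hy
      rcases hy with h' | h'
      · rw [h']; exact h1 x h
      · rw [h']; exact h2 x h
    · simp only [dif_neg h] at hg; exact nomatch hg
  · intro x h
    exact ⟨f x h, ⟨_, dif_pos h, by simp⟩⟩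

theorem dualDim_anon (hY : 2 ≤ Fintype.card Y) :
    dualDim (anonFam X Y) =
      (((1 + (Fintype.card Y).choose 2) ^ Fintype.card X : ℕ) : ℕ∞) := by
  classical
  have hcard : (twoReg X Y).encard
      = (((1 + (Fintype.card Y).choose 2) ^ Fintype.card X : ℕ) : ℕ∞) := by
    rw [twoReg, ← Set.image_univ, Set.InjOn.encard_image PhiMap_injective.injOn,
      Set.encard_univ, ENat.card_eq_coe_fintype_card]
    congr 1
    rw [Fintype.card_fun, Fintype.card_option, Fintype.card_finset_len]
    ring_nf
  apply le_antisymm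
  · apply sInf_le
    refine ⟨twoReg X Y, ⟨twoReg_subset_anon, ?_⟩, hcard⟩
    refine ⟨supS, ?_, ?_⟩
    · intro K hK
      have hKa : K ∈ anonFam X Y := twoReg_subset_anon hK
      exact ⟨fun R hR => hR.1, supS_convex K,
        ⟨⟨K, supS_mem_self hKa⟩, by rw [sInter_supS hKa]; exact supS_mem_self hKa⟩, sInter_supS hKa⟩
    · apply le_antisymm
      · rintro R hR
        simp only [Set.mem_iUnion] at hR
        obtain ⟨K, -, hR, -, -⟩ := hR
        exact hR
      · intro R hR
        simp only [Set.mem_iUnion]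
        obtain ⟨g, hsub, hd⟩ := exists_twoReg_le hR
        exact ⟨PhiMap g, ⟨g, rfl⟩, hR, hsub, hd⟩
  · apply le_sInf
    rintro m ⟨𝒦, ⟨h𝒦A, 𝒮, h𝒮, hcov⟩, rfl⟩
    rw [← hcard]
    apply Set.encard_le_encard
    -- show every 2-regular relation is in 𝒦
    rintro K ⟨g, rfl⟩
    have hKa : PhiMap g ∈ anonFam X Y := PhiMap_mem_anon g
    have : PhiMap g ∈ ⋃ K ∈ 𝒦, 𝒮 K := hcov ▸ hKa
    simp only [Set.mem_iUnion] at this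
    obtain ⟨K', hK', hmem⟩ := this
    obtain ⟨hsub, hconv, ⟨hne, hint⟩, hintereq⟩ := h𝒮 K' hK'
    have hK'mem : K' ∈ 𝒮 K' := by rw [hintereq] at hint; exact hint
    have hK'sub : K' ⊆ PhiMap g := hintereq ▸ Set.sInter_subset_of_mem hmem
    suffices h : K' = PhiMap g by rw [← h]; exact hK'
    apply le_antisymm hK'sub
    rintro ⟨x, y⟩ hxy
    obtain ⟨s, hg, hys⟩ := hxy
    by_cases hx : x ∈ relDom K'
    · -- K' has ≥ 2 images of x, all within the 2-element fiber s, so fiber matches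
      have hK'a : K' ∈ anonFam X Y := h𝒦A hK'
      obtain ⟨z, z', hzz, hz1, hz2⟩ := hK'a x hx
      obtain ⟨a, b, hab, hs⟩ := Finset.card_eq_two.mp s.2
      have hzs : z ∈ s.1 := (mem_PhiMap hg).mp (hK'sub hz1)
      have hz's : z' ∈ s.1 := (mem_PhiMap hg).mp (hK'sub hz2)
      rw [hs] at hzs hz's hys
      simp only [Finset.mem_insert, Finset.mem_singleton] at hzs hz's hys
      rcases hys with rfl | rfl
      · rcases hzs with rfl | rfl
        · exact hz1
        · rcases hz's with rfl | rfl
          · exact hz2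
          · exact absurd rfl hzz
      · rcases hzs with rfl | rfl
        · rcases hz's with rfl | rfl
          · exact absurd rfl hzz
          · exact hz2
        · exact hz1
    · -- contradiction: K' ∪ {(x,y)} in interval, anonymous, but x has one image
      exfalso
      have hC : K' ∪ {(x, y)} ∈ anonFam X Y := by
        have := hconv _ hK'mem _ hmem (K' ∪ {(x, y)})
          Set.subset_union_left
          (Set.union_subset hK'sub (by simpa using ⟨s, hg, hys⟩))
        exact hsub this
      obtain ⟨z, z', hzz, h1, h2⟩ := hC x ⟨y, Or.inr rfl⟩
      have hza : z = y := by
        rcases h1 with h1 | h1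
        · exact absurd ⟨z, h1⟩ hx
        · exact congrArg Prod.snd (Set.mem_singleton_iff.mp h1)
      have hz'a : z' = y := by
        rcases h2 with h2 | h2
        · exact absurd ⟨z', h2⟩ hx
        · exact congrArg Prod.snd (Set.mem_singleton_iff.mp h2)
      exact hzz (hza.trans hz'a.symm)

end Dual

theorem stmt15 {X Y : Type*} [Fintype X] [Fintype Y]
    (hX : 2 ≤ Fintype.card X) (hY : 2 ≤ Fintype.card Y) :
    upperDim (anonFam X Y) = ((2 ^ Fintype.card X : ℕ) : ℕ∞) ∧
    dualDim (anonFam X Y) =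
      ((∑ k ∈ Finset.range (Fintype.card X + 1),
          (Fintype.card X).choose k * ((Fintype.card Y).choose 2) ^ k : ℕ) : ℕ∞) ∧
    (∑ k ∈ Finset.range (Fintype.card X + 1),
        (Fintype.card X).choose k * ((Fintype.card Y).choose 2) ^ k : ℕ)
      = (1 + Fintype.card Y * (Fintype.card Y - 1) / 2) ^ Fintype.card X := by
  have hsum : (∑ k ∈ Finset.range (Fintype.card X + 1),
      (Fintype.card X).choose k * ((Fintype.card Y).choose 2) ^ k : ℕ)
      = (1 + (Fintype.card Y).choose 2) ^ Fintype.card X := by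
    rw [add_comm 1 ((Fintype.card Y).choose 2), add_pow]
    apply Finset.sum_congr rfl
    intro k _
    rw [one_pow, mul_one, Nat.cast_id, mul_comm]
  refine ⟨upperDim_anon hX hY, ?_, ?_⟩
  · rw [dualDim_anon hY, hsum]
  · rw [hsum, Nat.choose_two_right]
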